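/- Let 0 < d ≤ 1, let 1 ≤ r < ∞ be real, and let C_r > 0. Write Ω_d = (0, π) × (−d, d) ⊂ ℝ² and Ω₁ = (0, π) × (−1, 1). Suppose that for every twice continuously differentiable function v : ℝ² → ℝ one has ∫_{Ω₁} |v|^r ≤ C_r · ( ∫_{Ω₁} ( |v|² + ‖Dv‖² + ‖D²v‖² ) )^{r/2}, where Dv and D²v denote the first and second Fréchet derivatives of v and ‖·‖ the operator norm. Then for every twice continuously differentiable function u : ℝ² → ℝ one has ∫_{Ω_d} |u|^r ≤ C_r · d^{1 − r/2} · ( ∫_{Ω_d} ( |u|² + ‖Du‖² + ‖D²u‖² ) )^{r/2}. -/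

import Mathlib

open Real MeasureTheory

private lemma integrableOn_rect {a b c e : ℝ} {g : ℝ × ℝ → ℝ} (hg : Continuous g) :
    IntegrableOn g (Set.Ioo a b ×ˢ Set.Ioo c e) := by
  have hK : IsCompact (Set.Icc a b ×ˢ Set.Icc c e) := isCompact_Icc.prod isCompact_Icc
  exact (hg.continuousOn.integrableOn_compact hK).mono_set
    (Set.prod_mono Set.Ioo_subset_Icc_self Set.Ioo_subset_Icc_self)

private lemma cov (d : ℝ) (hd : 0 < d) (g : ℝ × ℝ → ℝ) (hg : Continuous g) :
    ∫ z in Set.Ioo (0:ℝ) π ×ˢ Set.Ioo (-d) d, g z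
      = d * ∫ z in Set.Ioo (0:ℝ) π ×ˢ Set.Ioo (-1:ℝ) 1, g (z.1, d * z.2) := by
  have hg2 : Continuous fun z : ℝ × ℝ => g (z.1, d * z.2) :=
    hg.comp (continuous_fst.prodMk (continuous_const.mul continuous_snd))
  have h1 : IntegrableOn g (Set.Ioo (0:ℝ) π ×ˢ Set.Ioo (-d) d) := integrableOn_rect hg
  have h2 : IntegrableOn (fun z : ℝ × ℝ => g (z.1, d * z.2))
      (Set.Ioo (0:ℝ) π ×ˢ Set.Ioo (-1:ℝ) 1) := integrableOn_rect hg2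
  rw [Measure.volume_eq_prod] at h1 h2
  rw [Measure.volume_eq_prod, setIntegral_prod _ h1, setIntegral_prod _ h2,
    ← integral_const_mul]
  refine setIntegral_congr_fun measurableSet_Ioo fun x _ => ?_
  have hle : -d ≤ d := by linarith
  rw [← integral_Ioc_eq_integral_Ioo, ← integral_Ioc_eq_integral_Ioo,
    ← intervalIntegral.integral_of_le hle,
    ← intervalIntegral.integral_of_le (by norm_num : (-1:ℝ) ≤ 1)]
  have := intervalIntegral.smul_integral_comp_mul_left
    (a := (-1:ℝ)) (b := 1) (fun y => g (x, y)) d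
  simp only [smul_eq_mul, mul_one, mul_neg_one] at this
  exact this.symm

/-- Scaling lemma of the appendix of the paper: the Sobolev embedding constant
of `H²(Ω_d) ↪ L^r(Ω_d)` on the strip `Ω_d = (0,π) × (-d,d)` scales like
`d^{1-r/2}` with respect to the half-width `d ≤ 1`. -/
theorem stmt_10 (d : ℝ) (hd0 : 0 < d) (hd1 : d ≤ 1) (r : ℝ) (hr : 1 ≤ r)
    (C_r : ℝ) (hC : 0 < C_r)
    (h : ∀ v : ℝ × ℝ → ℝ, ContDiff ℝ 2 v →
      (∫ z in Set.Ioo (0:ℝ) π ×ˢ Set.Ioo (-1:ℝ) 1, |v z| ^ r)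
        ≤ C_r * (∫ z in Set.Ioo (0:ℝ) π ×ˢ Set.Ioo (-1:ℝ) 1,
            (|v z| ^ 2 + ‖fderiv ℝ v z‖ ^ 2 + ‖fderiv ℝ (fderiv ℝ v) z‖ ^ 2)) ^ (r / 2)) :
    ∀ u : ℝ × ℝ → ℝ, ContDiff ℝ 2 u →
      (∫ z in Set.Ioo (0:ℝ) π ×ˢ Set.Ioo (-d) d, |u z| ^ r)
        ≤ C_r * d ^ (1 - r / 2) * (∫ z in Set.Ioo (0:ℝ) π ×ˢ Set.Ioo (-d) d,
            (|u z| ^ 2 + ‖fderiv ℝ u z‖ ^ 2 + ‖fderiv ℝ (fderiv ℝ u) z‖ ^ 2)) ^ (r / 2) := by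
  intro u hu
  have hrpos : (0:ℝ) < r := lt_of_lt_of_le one_pos hr
  -- the scaling map and the right-composition operator
  set L : (ℝ × ℝ) →L[ℝ] (ℝ × ℝ) :=
    (ContinuousLinearMap.fst ℝ ℝ ℝ).prod (d • ContinuousLinearMap.snd ℝ ℝ ℝ) with hL
  have hLapp : ∀ z : ℝ × ℝ, L z = (z.1, d * z.2) := fun z => rfl
  have hLnorm : ‖L‖ ≤ 1 := by
    refine ContinuousLinearMap.opNorm_le_bound _ zero_le_one fun z => ?_
    rw [one_mul, hLapp]
    have hz : ‖z‖ = max ‖z.1‖ ‖z.2‖ := rfl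
    rw [hz]
    refine max_le_max le_rfl ?_
    calc ‖d * z.2‖ = |d| * |z.2| := by rw [Real.norm_eq_abs, abs_mul]
      _ ≤ 1 * |z.2| := by
          refine mul_le_mul_of_nonneg_right ?_ (abs_nonneg _)
          rw [abs_of_pos hd0]; exact hd1
      _ = ‖z.2‖ := by rw [one_mul, Real.norm_eq_abs]
  set P : ((ℝ×ℝ) →L[ℝ] ℝ) →L[ℝ] ((ℝ×ℝ) →L[ℝ] ℝ) :=
    (ContinuousLinearMap.compL ℝ (ℝ×ℝ) (ℝ×ℝ) ℝ).flip L with hP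
  have hPapp : ∀ w : (ℝ×ℝ) →L[ℝ] ℝ, P w = w.comp L := fun w => rfl
  have hPnorm : ‖P‖ ≤ 1 := by
    refine ContinuousLinearMap.opNorm_le_bound _ zero_le_one fun w => ?_
    rw [one_mul, hPapp]
    calc ‖w.comp L‖ ≤ ‖w‖ * ‖L‖ := ContinuousLinearMap.opNorm_comp_le _ _
      _ ≤ ‖w‖ * 1 := mul_le_mul_of_nonneg_left hLnorm (norm_nonneg _)
      _ = ‖w‖ := mul_one _
  -- the rescaled function and its derivatives
  set v : ℝ × ℝ → ℝ := fun z => u (L z) with hvdef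
  have hv : ContDiff ℝ 2 v := hu.comp L.contDiff
  have hu1 : Differentiable ℝ u := hu.differentiable (by norm_num)
  have huf : ContDiff ℝ 1 (fderiv ℝ u) := hu.fderiv_right (m := 1) (by norm_num)
  have hufd : Differentiable ℝ (fderiv ℝ u) := huf.differentiable (by norm_num)
  have hDv : ∀ z, fderiv ℝ v z = (fderiv ℝ u (L z)).comp L := fun z =>
    (((hu1 (L z)).hasFDerivAt).comp z L.hasFDerivAt).fderiv
  have hD2v : ∀ z, fderiv ℝ (fderiv ℝ v) z
      = P.comp ((fderiv ℝ (fderiv ℝ u) (L z)).comp L) := by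
    intro z
    have h1 : HasFDerivAt (fun w => fderiv ℝ u (L w))
        ((fderiv ℝ (fderiv ℝ u) (L z)).comp L) z :=
      ((hufd (L z)).hasFDerivAt).comp z L.hasFDerivAt
    have h2 : HasFDerivAt (fun w => P (fderiv ℝ u (L w)))
        (P.comp ((fderiv ℝ (fderiv ℝ u) (L z)).comp L)) z :=
      P.hasFDerivAt.comp z h1
    have h3 : fderiv ℝ v = fun w => P (fderiv ℝ u (L w)) := by
      funext w; rw [hDv w]; rfl
    rw [h3]
    exact h2.fderiv
  -- pointwise norm bounds
  have hDvle : ∀ z, ‖fderiv ℝ v z‖ ≤ ‖fderiv ℝ u (L z)‖ := by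
    intro z
    rw [hDv z]
    calc ‖(fderiv ℝ u (L z)).comp L‖ ≤ ‖fderiv ℝ u (L z)‖ * ‖L‖ :=
          ContinuousLinearMap.opNorm_comp_le _ _
      _ ≤ ‖fderiv ℝ u (L z)‖ * 1 := mul_le_mul_of_nonneg_left hLnorm (norm_nonneg _)
      _ = _ := mul_one _
  have hD2vle : ∀ z, ‖fderiv ℝ (fderiv ℝ v) z‖ ≤ ‖fderiv ℝ (fderiv ℝ u) (L z)‖ := by
    intro z
    rw [hD2v z]
    calc ‖P.comp ((fderiv ℝ (fderiv ℝ u) (L z)).comp L)‖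
        ≤ ‖P‖ * ‖(fderiv ℝ (fderiv ℝ u) (L z)).comp L‖ :=
          ContinuousLinearMap.opNorm_comp_le _ _
      _ ≤ 1 * (‖fderiv ℝ (fderiv ℝ u) (L z)‖ * ‖L‖) := by
          refine mul_le_mul hPnorm (ContinuousLinearMap.opNorm_comp_le _ _)
            (norm_nonneg ((fderiv ℝ (fderiv ℝ u) (L z)).comp L)) zero_le_one
      _ ≤ 1 * (‖fderiv ℝ (fderiv ℝ u) (L z)‖ * 1) := by
          refine mul_le_mul_of_nonneg_left ?_ zero_le_one
          exact mul_le_mul_of_nonneg_left hLnorm (norm_nonneg (fderiv ℝ (fderiv ℝ u) (L z)))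
      _ = _ := by ring
  -- continuity facts
  have hcu : Continuous u := hu.continuous
  have hc1 : Continuous (fderiv ℝ u) := hu.continuous_fderiv (by norm_num)
  have hc2 : Continuous (fderiv ℝ (fderiv ℝ u)) := huf.continuous_fderiv (by norm_num)
  have hcv : Continuous v := hv.continuous
  have hcv1 : Continuous (fderiv ℝ v) := hv.continuous_fderiv (by norm_num)
  have hcv2 : Continuous (fderiv ℝ (fderiv ℝ v)) :=
    (hv.fderiv_right (m := 1) (by norm_num)).continuous_fderiv (by norm_num)
  set E : ℝ × ℝ → ℝ :=
    fun z => |u z| ^ 2 + ‖fderiv ℝ u z‖ ^ 2 + ‖fderiv ℝ (fderiv ℝ u) z‖ ^ 2 with hE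
  set Ev : ℝ × ℝ → ℝ :=
    fun z => |v z| ^ 2 + ‖fderiv ℝ v z‖ ^ 2 + ‖fderiv ℝ (fderiv ℝ v) z‖ ^ 2 with hEv
  have hEc : Continuous E := ((hcu.abs.pow 2).add ((hc1.norm).pow 2)).add ((Continuous.norm (f := fderiv ℝ (fderiv ℝ u)) hc2).pow 2)
  have hEvc : Continuous Ev := ((hcv.abs.pow 2).add ((hcv1.norm).pow 2)).add ((Continuous.norm (f := fderiv ℝ (fderiv ℝ v)) hcv2).pow 2)
  have hgr : Continuous fun z : ℝ × ℝ => |u z| ^ r :=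
    (hcu.abs).rpow_const fun z => Or.inr (le_of_lt hrpos)
  -- step 1: change of variables for |u|^r
  have step1 : (∫ z in Set.Ioo (0:ℝ) π ×ˢ Set.Ioo (-d) d, |u z| ^ r)
      = d * ∫ z in Set.Ioo (0:ℝ) π ×ˢ Set.Ioo (-1:ℝ) 1, |v z| ^ r :=
    cov d hd0 (fun z => |u z| ^ r) hgr
  -- step 4: change of variables for E
  have step4 : (∫ z in Set.Ioo (0:ℝ) π ×ˢ Set.Ioo (-d) d, E z)
      = d * ∫ z in Set.Ioo (0:ℝ) π ×ˢ Set.Ioo (-1:ℝ) 1, E (L z) :=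
    cov d hd0 E hEc
  -- step 3: pointwise comparison of energies
  have step3 : (∫ z in Set.Ioo (0:ℝ) π ×ˢ Set.Ioo (-1:ℝ) 1, Ev z)
      ≤ ∫ z in Set.Ioo (0:ℝ) π ×ˢ Set.Ioo (-1:ℝ) 1, E (L z) := by
    refine setIntegral_mono_on (integrableOn_rect hEvc)
      (integrableOn_rect (hEc.comp L.continuous))
      (measurableSet_Ioo.prod measurableSet_Ioo) fun z _ => ?_
    have e1 : |v z| ^ 2 = |u (L z)| ^ 2 := rfl
    have e2 : ‖fderiv ℝ v z‖ ^ 2 ≤ ‖fderiv ℝ u (L z)‖ ^ 2 :=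
      pow_le_pow_left₀ (norm_nonneg _) (hDvle z) 2
    have e3 : ‖fderiv ℝ (fderiv ℝ v) z‖ ^ 2 ≤ ‖fderiv ℝ (fderiv ℝ u) (L z)‖ ^ 2 :=
      pow_le_pow_left₀ (norm_nonneg (fderiv ℝ (fderiv ℝ v) z)) (hD2vle z) 2
    simp only [hEv, hE, Function.comp]
    rw [e1]
    exact add_le_add (add_le_add le_rfl e2) e3
  -- nonnegativity of integrals
  have hJnn : 0 ≤ ∫ z in Set.Ioo (0:ℝ) π ×ˢ Set.Ioo (-d) d, E z :=
    setIntegral_nonneg (measurableSet_Ioo.prod measurableSet_Ioo)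
      fun z _ => by simp only [hE]; positivity
  have hEvnn : 0 ≤ ∫ z in Set.Ioo (0:ℝ) π ×ˢ Set.Ioo (-1:ℝ) 1, Ev z :=
    setIntegral_nonneg (measurableSet_Ioo.prod measurableSet_Ioo)
      fun z _ => by simp only [hEv]; positivity
  set J : ℝ := ∫ z in Set.Ioo (0:ℝ) π ×ˢ Set.Ioo (-d) d, E z with hJ
  have step34 : (∫ z in Set.Ioo (0:ℝ) π ×ˢ Set.Ioo (-1:ℝ) 1, Ev z) ≤ d⁻¹ * J := by
    refine le_trans step3 ?_
    rw [step4, inv_mul_cancel_left₀ (ne_of_gt hd0)]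
  calc (∫ z in Set.Ioo (0:ℝ) π ×ˢ Set.Ioo (-d) d, |u z| ^ r)
      = d * ∫ z in Set.Ioo (0:ℝ) π ×ˢ Set.Ioo (-1:ℝ) 1, |v z| ^ r := step1
    _ ≤ d * (C_r * (∫ z in Set.Ioo (0:ℝ) π ×ˢ Set.Ioo (-1:ℝ) 1, Ev z) ^ (r / 2)) :=
        mul_le_mul_of_nonneg_left (h v hv) hd0.le
    _ ≤ d * (C_r * (d⁻¹ * J) ^ (r / 2)) := by
        refine mul_le_mul_of_nonneg_left (mul_le_mul_of_nonneg_left ?_ hC.le) hd0.le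
        exact Real.rpow_le_rpow hEvnn step34 (by positivity)
    _ = C_r * d ^ (1 - r / 2) * J ^ (r / 2) := by
        rw [Real.mul_rpow (inv_nonneg.2 hd0.le) hJnn, Real.inv_rpow hd0.le,
          ← Real.rpow_neg hd0.le]
        have hd' : d ^ (1 - r / 2) = d * d ^ (-(r / 2)) := by
          rw [sub_eq_add_neg, Real.rpow_add hd0, Real.rpow_one]
        rw [hd']; ring
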